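/- Let τ > 0 and let (w_e)_{e∈E} be mutually independent random variables with w_e ∈ [0,τ] almost surely for every e ∈ E, and set W := E[f(w)]. Let δ > 1, k ≥ 1, α ∈ (0,1], and c ≥ ((4 + 2δ)/(3(δ − 1)²)) · log(k/α). If W > c·τ, then P[f(w) > δW] ≤ α/k. -/

import Mathlib

open Real

lemma young_ineq {x : ℝ} (y : ℝ) (hx : 0 < x) : x * y ≤ x * Real.log x - x + Real.exp y := by
  have h := Real.add_one_le_exp (y - Real.log x)
  have h2 : x * Real.exp (y - Real.log x) = Real.exp y := by
    rw [Real.exp_sub, Real.exp_log hx]; field_simp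
  nlinarith [mul_le_mul_of_nonneg_left h hx.le]

lemma mlogm_ineq {m s : ℝ} (hm : 0 < m) (hs : 0 < s) :
    0 ≤ m * Real.log m - m * Real.log s - m + s := by
  have h := Real.add_one_le_exp (Real.log s - Real.log m)
  have h2 : m * Real.exp (Real.log s - Real.log m) = s := by
    rw [Real.exp_sub, Real.exp_log hs, Real.exp_log hm]; field_simp
  nlinarith [mul_le_mul_of_nonneg_left h hm.le]

lemma exp_interp {x t : ℝ} (h0 : 0 ≤ x) (h1 : x ≤ 1) :
    Real.exp (x * t) ≤ 1 - x + x * Real.exp t := by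
  have := (convexOn_exp.2 (Set.mem_univ 0) (Set.mem_univ t) (by linarith : (0:ℝ) ≤ 1 - x) h0
    (by ring))
  simpa [smul_eq_mul] using this

noncomputable def qfun (v : ℝ) : ℝ := Real.log (1+v) - (5*v^2+6*v)/(2*v^2+8*v+6)

lemma qfun_hasDeriv {v : ℝ} (hv : 0 ≤ v) :
    HasDerivAt qfun (1/(1+v) - ((10*v+6)*(2*v^2+8*v+6) - (5*v^2+6*v)*(4*v+8))/(2*v^2+8*v+6)^2)
      v := by
  have h1v : (0:ℝ) < 1 + v := by linarith
  have hden : (0:ℝ) < 2*v^2+8*v+6 := by nlinarith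
  have hlog : HasDerivAt (fun v : ℝ => Real.log (1+v)) (1/(1+v)) v := by
    have hid : HasDerivAt (fun v : ℝ => 1 + v) 1 v := by
      simpa using (hasDerivAt_id v).const_add (1:ℝ)
    exact ((Real.hasDerivAt_log h1v.ne').comp v hid).congr_deriv (by simp)
  have hnum : HasDerivAt (fun v : ℝ => 5*v^2+6*v) (10*v+6) v := by
    have := ((hasDerivAt_pow 2 v).const_mul (5:ℝ)).add ((hasDerivAt_id v).const_mul (6:ℝ))
    exact this.congr_deriv (by norm_num; ring)
  have hden' : HasDerivAt (fun v : ℝ => 2*v^2+8*v+6) (4*v+8) v := by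
    have := (((hasDerivAt_pow 2 v).const_mul (2:ℝ)).add ((hasDerivAt_id v).const_mul (8:ℝ))).add_const (6:ℝ)
    exact this.congr_deriv (by norm_num; ring)
  exact hlog.sub (hnum.div hden' hden.ne')

lemma qfun_deriv_nonneg {v : ℝ} (hv : 0 ≤ v) :
    0 ≤ 1/(1+v) - ((10*v+6)*(2*v^2+8*v+6) - (5*v^2+6*v)*(4*v+8))/(2*v^2+8*v+6)^2 := by
  have h1v : (0:ℝ) < 1 + v := by linarith
  have hden : (0:ℝ) < 2*v^2+8*v+6 := by nlinarith
  have hN : (10*v+6)*(2*v^2+8*v+6) - (5*v^2+6*v)*(4*v+8) = 28*v^2+60*v+36 := by ring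
  rw [hN, sub_nonneg, div_le_div_iff₀ (by positivity) h1v]
  nlinarith [sq_nonneg v, pow_pos hden 2]

lemma log_lb {u : ℝ} (hu : 0 ≤ u) :
    (5*u^2+6*u)/(2*u^2+8*u+6) ≤ Real.log (1+u) := by
  have mono : MonotoneOn qfun (Set.Ici 0) := by
    apply monotoneOn_of_deriv_nonneg (convex_Ici 0)
    · intro x hx
      exact (qfun_hasDeriv hx).continuousAt.continuousWithinAt
    · intro x hx
      rw [interior_Ici] at hx
      exact (qfun_hasDeriv (le_of_lt hx)).differentiableAt.differentiableWithinAt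
    · intro x hx
      rw [interior_Ici] at hx
      rw [(qfun_hasDeriv (le_of_lt hx)).deriv]
      exact qfun_deriv_nonneg (le_of_lt hx)
  have h0 : qfun 0 = 0 := by simp [qfun]
  have := mono (Set.self_mem_Ici) hu hu
  rw [h0] at this
  have : 0 ≤ Real.log (1+u) - (5*u^2+6*u)/(2*u^2+8*u+6) := this
  linarith

lemma bennett_cmp {δ : ℝ} (hδ : 1 < δ) :
    3*(δ-1)^2/(4+2*δ) ≤ δ * Real.log δ - δ + 1 := by
  have hu : (0:ℝ) ≤ δ - 1 := by linarith
  have hlog := log_lb hu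
  have h1u : 1 + (δ - 1) = δ := by ring
  rw [h1u] at hlog
  have hδ0 : (0:ℝ) < δ := by linarith
  have h1 : δ * ((5*(δ-1)^2+6*(δ-1))/(2*(δ-1)^2+8*(δ-1)+6)) ≤ δ * Real.log δ :=
    mul_le_mul_of_nonneg_left hlog hδ0.le
  have hden : (0:ℝ) < 2*(δ-1)^2+8*(δ-1)+6 := by nlinarith
  have hd2 : (0:ℝ) < 4+2*δ := by linarith
  have key : δ * ((5*(δ-1)^2+6*(δ-1))/(2*(δ-1)^2+8*(δ-1)+6)) - δ + 1 = 3*(δ-1)^2/(4+2*δ) := by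
    field_simp
    ring
  linarith
open MeasureTheory Real

section EntBasics
variable {X : Type*} [MeasurableSpace X] (ρ : Measure X)

/-- entropy functional -/
noncomputable def ent (g : X → ℝ) : ℝ :=
  ∫ x, g x * Real.log (g x) ∂ρ - (∫ x, g x ∂ρ) * Real.log (∫ x, g x ∂ρ)

variable [IsProbabilityMeasure ρ]

lemma integrable_bdd {g : X → ℝ} (hm : Measurable g) {C : ℝ} (h : ∀ x, |g x| ≤ C) :
    Integrable g ρ :=
  Integrable.mono' (integrable_const C) hm.aestronglyMeasurable (ae_of_all _ h)

lemma log_abs_le {a b y : ℝ} (ha : 0 < a) (hy : y ∈ Set.Icc a b) :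
    |Real.log y| ≤ |Real.log a| + |Real.log b| := by
  obtain ⟨h1, h2⟩ := hy
  have l1 : Real.log a ≤ Real.log y := Real.log_le_log ha h1
  have l2 : Real.log y ≤ Real.log b := Real.log_le_log (ha.trans_le h1) h2
  rw [abs_le]; constructor
  · have := neg_abs_le (Real.log a); have := abs_nonneg (Real.log b); linarith
  · have := le_abs_self (Real.log b); have := abs_nonneg (Real.log a); linarith

lemma glogg_abs_le {a b y : ℝ} (ha : 0 < a) (hy : y ∈ Set.Icc a b) :
    |y * Real.log y| ≤ b * (|Real.log a| + |Real.log b|) := by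
  rw [abs_mul]
  have h0 : 0 ≤ y := ha.le.trans hy.1
  have hyb : |y| ≤ b := by rw [abs_of_nonneg h0]; exact hy.2
  have hl := log_abs_le ha hy
  have hbnn : (0:ℝ) ≤ b := h0.trans hy.2
  exact mul_le_mul hyb hl (abs_nonneg _) hbnn

lemma integral_mem_Icc {g : X → ℝ} (hm : Measurable g) {a b : ℝ}
    (hbd : ∀ x, g x ∈ Set.Icc a b) : (∫ x, g x ∂ρ) ∈ Set.Icc a b := by
  have hab : ∀ x, |g x| ≤ max |a| |b| := fun x => by
    rw [abs_le]; constructor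
    · have := (hbd x).1; have := neg_abs_le a; have := le_max_left |a| |b|; linarith
    · have := (hbd x).2; have := le_abs_self b; have := le_max_right |a| |b|; linarith
  have hint : Integrable g ρ := integrable_bdd ρ hm hab
  constructor
  · have := integral_mono (integrable_const a) hint (fun x => (hbd x).1)
    simpa using this
  · have := integral_mono hint (integrable_const b) (fun x => (hbd x).2)
    simpa using this

/-- abs bound on entropy -/
lemma abs_ent_le {g : X → ℝ} (hm : Measurable g) {a b : ℝ} (ha : 0 < a)
    (hbd : ∀ x, g x ∈ Set.Icc a b) :
    |ent ρ g| ≤ 2 * (b * (|Real.log a| + |Real.log b|)) := by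
  have h1 : |∫ x, g x * Real.log (g x) ∂ρ| ≤ b * (|Real.log a| + |Real.log b|) := by
    have := norm_integral_le_of_norm_le_const (μ := ρ)
      (f := fun x => g x * Real.log (g x)) (C := b * (|Real.log a| + |Real.log b|))
      (ae_of_all _ fun x => by
        rw [Real.norm_eq_abs]; exact glogg_abs_le ha (hbd x))
    simpa using this
  have h2 : |(∫ x, g x ∂ρ) * Real.log (∫ x, g x ∂ρ)| ≤ b * (|Real.log a| + |Real.log b|) :=
    glogg_abs_le ha (integral_mem_Icc ρ hm hbd)
  calc |ent ρ g| ≤ |∫ x, g x * Real.log (g x) ∂ρ| + |(∫ x, g x ∂ρ) * Real.log (∫ x, g x ∂ρ)| :=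
        abs_sub _ _
    _ ≤ _ := by linarith

/-- Duality: if `∫ e^u ≤ 1` then `∫ g u ≤ ent g`. -/
lemma integral_mul_le_ent {g u : X → ℝ} (hg : Measurable g) {a b : ℝ} (ha : 0 < a)
    (hbd : ∀ x, g x ∈ Set.Icc a b) (hu : Measurable u) {cu : ℝ} (hub : ∀ x, |u x| ≤ cu)
    (hexp : ∫ x, Real.exp (u x) ∂ρ ≤ 1) :
    ∫ x, g x * u x ∂ρ ≤ ent ρ g := by
  set m := ∫ x, g x ∂ρ with hm
  have hmI := integral_mem_Icc ρ hg hbd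
  have hm0 : 0 < m := ha.trans_le hmI.1
  -- pointwise Young
  have hpt : ∀ x, g x * u x ≤ g x * Real.log (g x) - g x * Real.log m - g x + m * Real.exp (u x) := by
    intro x
    have hgx : 0 < g x := ha.trans_le (hbd x).1
    have hy := young_ineq (x := g x / m) (u x) (by positivity)
    have hlog : Real.log (g x / m) = Real.log (g x) - Real.log m :=
      Real.log_div hgx.ne' hm0.ne'
    rw [hlog] at hy
    have := mul_le_mul_of_nonneg_left hy hm0.le
    calc g x * u x = m * (g x / m * u x) := by field_simp
      _ ≤ m * (g x / m * (Real.log (g x) - Real.log m) - g x / m + Real.exp (u x)) := this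
      _ = g x * Real.log (g x) - g x * Real.log m - g x + m * Real.exp (u x) := by
          field_simp
  -- integrability
  have C1 : ℝ := 0
  have hgint : Integrable g ρ := integrable_bdd ρ hg (fun x => by
    rw [abs_of_nonneg (ha.le.trans (hbd x).1)]; exact (hbd x).2)
  have hglogint : Integrable (fun x => g x * Real.log (g x)) ρ :=
    integrable_bdd ρ (hg.mul hg.log) (fun x => glogg_abs_le ha (hbd x))
  have hguint : Integrable (fun x => g x * u x) ρ := by
    apply integrable_bdd ρ (hg.mul hu) (C := b * cu) (fun x => by
      rw [Pi.mul_apply, abs_mul]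
      have hgx0 : 0 ≤ g x := ha.le.trans (hbd x).1
      have : |g x| ≤ b := by rw [abs_of_nonneg hgx0]; exact (hbd x).2
      exact mul_le_mul this (hub x) (abs_nonneg _) (hgx0.trans (hbd x).2))
  have hexpint : Integrable (fun x => Real.exp (u x)) ρ := by
    apply integrable_bdd ρ hu.exp (C := Real.exp cu) (fun x => by
      rw [abs_of_nonneg (Real.exp_pos _).le]
      exact Real.exp_le_exp.2 ((le_abs_self _).trans (hub x)))
  have hrhsint : Integrable
      (fun x => g x * Real.log (g x) - g x * Real.log m - g x + m * Real.exp (u x)) ρ := by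
    exact ((hglogint.sub (hgint.mul_const _)).sub hgint).add (hexpint.const_mul m)
  have hIm := integral_mono hguint hrhsint hpt
  have e1 : ∫ x, (g x * Real.log (g x) - g x * Real.log m - g x + m * Real.exp (u x)) ∂ρ
      = (∫ x, (g x * Real.log (g x) - g x * Real.log m - g x) ∂ρ) + ∫ x, m * Real.exp (u x) ∂ρ :=
    integral_add ((hglogint.sub (hgint.mul_const _)).sub hgint) (hexpint.const_mul m)
  have e2 : ∫ x, (g x * Real.log (g x) - g x * Real.log m - g x) ∂ρ
      = (∫ x, (g x * Real.log (g x) - g x * Real.log m) ∂ρ) - ∫ x, g x ∂ρ :=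
    integral_sub (hglogint.sub (hgint.mul_const _)) hgint
  have e3 : ∫ x, (g x * Real.log (g x) - g x * Real.log m) ∂ρ
      = (∫ x, g x * Real.log (g x) ∂ρ) - ∫ x, g x * Real.log m ∂ρ :=
    integral_sub hglogint (hgint.mul_const _)
  have e4 : ∫ x, g x * Real.log m ∂ρ = (Real.log m) * ∫ x, g x ∂ρ := by
    rw [← integral_const_mul]; congr 1; funext x; ring
  have e5 : ∫ x, m * Real.exp (u x) ∂ρ = m * ∫ x, Real.exp (u x) ∂ρ := integral_const_mul m _
  rw [e1, e2, e3, e4, e5] at hIm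
  have : m * ∫ x, Real.exp (u x) ∂ρ ≤ m * 1 := mul_le_mul_of_nonneg_left hexp hm0.le
  simp only [ent]
  linarith

end EntBasics
section EntProd
open MeasureTheory Real
variable {α β : Type*} [MeasurableSpace α] [MeasurableSpace β]
  (μ1 : Measure α) (μ2 : Measure β) [IsProbabilityMeasure μ1] [IsProbabilityMeasure μ2]

lemma measurable_ent_right {g : α × β → ℝ} (hg : Measurable g) :
    Measurable (fun x => ent μ2 (fun y => g (x, y))) := by
  have h1 : StronglyMeasurable fun x => ∫ y, g (x, y) ∂μ2 :=
    hg.stronglyMeasurable.integral_prod_right'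
  have h2 : StronglyMeasurable fun x => ∫ y, g (x, y) * Real.log (g (x, y)) ∂μ2 :=
    (hg.mul hg.log).stronglyMeasurable.integral_prod_right'
  exact h2.measurable.sub (h1.measurable.mul h1.measurable.log)

lemma measurable_ent_left {g : α × β → ℝ} (hg : Measurable g) :
    Measurable (fun y => ent μ1 (fun x => g (x, y))) := by
  have h1 : StronglyMeasurable fun y => ∫ x, g (x, y) ∂μ1 :=
    hg.stronglyMeasurable.integral_prod_left'
  have h2 : StronglyMeasurable fun y => ∫ x, g (x, y) * Real.log (g (x, y)) ∂μ1 :=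
    (hg.mul hg.log).stronglyMeasurable.integral_prod_left'
  exact h2.measurable.sub (h1.measurable.mul h1.measurable.log)

variable {a b : ℝ}

/-- chain rule identity for entropy over a product measure -/
lemma ent_prod {g : α × β → ℝ} (hg : Measurable g) (ha : 0 < a)
    (hbd : ∀ p, g p ∈ Set.Icc a b) :
    ent (μ1.prod μ2) g
      = (∫ y, ent μ1 (fun x => g (x, y)) ∂μ2) + ent μ2 (fun y => ∫ x, g (x, y) ∂μ1) := by
  have habs : ∀ p, |g p| ≤ b := fun p => by
    rw [abs_of_nonneg (ha.le.trans (hbd p).1)]; exact (hbd p).2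
  have hgint : Integrable g (μ1.prod μ2) := integrable_bdd _ hg habs
  have hglogint : Integrable (fun p => g p * Real.log (g p)) (μ1.prod μ2) :=
    integrable_bdd _ (hg.mul hg.log) (fun p => glogg_abs_le ha (hbd p))
  have e1 : ∫ p, g p ∂(μ1.prod μ2) = ∫ y, ∫ x, g (x, y) ∂μ1 ∂μ2 :=
    integral_prod_symm g hgint
  have e2 : ∫ p, g p * Real.log (g p) ∂(μ1.prod μ2)
      = ∫ y, ∫ x, g (x, y) * Real.log (g (x, y)) ∂μ1 ∂μ2 :=
    integral_prod_symm _ hglogint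
  -- integrability of the pieces in y
  have hmeas_h : StronglyMeasurable fun y => ∫ x, g (x, y) ∂μ1 :=
    hg.stronglyMeasurable.integral_prod_left'
  have hbd_h : ∀ y, (∫ x, g (x, y) ∂μ1) ∈ Set.Icc a b := fun y =>
    integral_mem_Icc μ1 (hg.comp (measurable_prodMk_right)) (fun x => hbd (x, y))
  have hint_hlogh : Integrable (fun y => (∫ x, g (x, y) ∂μ1) * Real.log (∫ x, g (x, y) ∂μ1)) μ2 :=
    integrable_bdd _ (hmeas_h.measurable.mul hmeas_h.measurable.log)
      (fun y => glogg_abs_le ha (hbd_h y))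
  have hint_gl : Integrable (fun y => ∫ x, g (x, y) * Real.log (g (x, y)) ∂μ1) μ2 := by
    apply integrable_bdd _ ((hg.mul hg.log).stronglyMeasurable.integral_prod_left'.measurable)
      (C := b * (|Real.log a| + |Real.log b|))
    intro y
    have := norm_integral_le_of_norm_le_const (μ := μ1)
      (f := fun x => g (x, y) * Real.log (g (x, y))) (C := b * (|Real.log a| + |Real.log b|))
      (ae_of_all _ fun x => by rw [Real.norm_eq_abs]; exact glogg_abs_le ha (hbd (x, y)))
    simpa using this
  have e3 : ∫ y, ent μ1 (fun x => g (x, y)) ∂μ2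
      = (∫ y, ∫ x, g (x, y) * Real.log (g (x, y)) ∂μ1 ∂μ2)
        - ∫ y, (∫ x, g (x, y) ∂μ1) * Real.log (∫ x, g (x, y) ∂μ1) ∂μ2 :=
    integral_sub hint_gl hint_hlogh
  rw [e3]
  simp only [ent]
  rw [e1, e2]
  ring

/-- convexity: entropy of the marginal is at most the average entropy -/
lemma ent_integral_le {g : α × β → ℝ} (hg : Measurable g) (ha : 0 < a)
    (hbd : ∀ p, g p ∈ Set.Icc a b) :
    ent μ2 (fun y => ∫ x, g (x, y) ∂μ1) ≤ ∫ x, ent μ2 (fun y => g (x, y)) ∂μ1 := by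
  set h : β → ℝ := fun y => ∫ x, g (x, y) ∂μ1 with hh
  have hmeas_h : StronglyMeasurable h := hg.stronglyMeasurable.integral_prod_left'
  have hbd_h : ∀ y, h y ∈ Set.Icc a b := fun y =>
    integral_mem_Icc μ1 (hg.comp (measurable_prodMk_right)) (fun x => hbd (x, y))
  have hint_h : Integrable h μ2 := integrable_bdd _ hmeas_h.measurable (fun y => by
    rw [abs_of_nonneg (ha.le.trans (hbd_h y).1)]; exact (hbd_h y).2)
  set M : ℝ := ∫ y, h y ∂μ2 with hM
  have hMI : M ∈ Set.Icc a b := integral_mem_Icc μ2 hmeas_h.measurable hbd_h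
  have hM0 : 0 < M := ha.trans_le hMI.1
  set u : β → ℝ := fun y => Real.log (h y) - Real.log M with hu
  have humeas : Measurable u := hmeas_h.measurable.log.sub measurable_const
  have hubd : ∀ y, |u y| ≤ 2 * (|Real.log a| + |Real.log b|) := fun y => by
    have h1 := log_abs_le ha (hbd_h y)
    have h2 := log_abs_le ha hMI
    calc |u y| ≤ |Real.log (h y)| + |Real.log M| := abs_sub _ _
      _ ≤ 2 * (|Real.log a| + |Real.log b|) := by linarith
  have hexp : ∫ y, Real.exp (u y) ∂μ2 ≤ 1 := by
    have : ∀ y, Real.exp (u y) = h y * M⁻¹ := fun y => by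
      rw [hu]; rw [Real.exp_sub, Real.exp_log (ha.trans_le (hbd_h y).1), Real.exp_log hM0]
      ring
    rw [integral_congr_ae (ae_of_all _ this), integral_mul_const]
    rw [← hM]
    rw [mul_inv_cancel₀ hM0.ne']
  -- ent μ2 h = ∫ h * u
  have hent_eq : ent μ2 h = ∫ y, h y * u y ∂μ2 := by
    have hlog : Integrable (fun y => h y * Real.log (h y)) μ2 :=
      integrable_bdd _ (hmeas_h.measurable.mul hmeas_h.measurable.log)
        (fun y => glogg_abs_le ha (hbd_h y))
    have e1 : ∫ y, h y * u y ∂μ2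
        = (∫ y, h y * Real.log (h y) ∂μ2) - ∫ y, h y * Real.log M ∂μ2 := by
      have : ∀ y, h y * u y = h y * Real.log (h y) - h y * Real.log M := fun y => by
        rw [hu]; ring
      rw [integral_congr_ae (ae_of_all _ this)]
      exact integral_sub hlog (hint_h.mul_const _)
    have e2 : ∫ y, h y * Real.log M ∂μ2 = M * Real.log M := by
      rw [integral_mul_const]
    rw [e1, e2]
    rfl
  -- Fubini
  have hFmeas : Measurable (fun p : α × β => g p * u p.2) := hg.mul (humeas.comp measurable_snd)
  have hFbd : ∀ p : α × β, |g p * u p.2| ≤ b * (2 * (|Real.log a| + |Real.log b|)) := fun p => by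
    rw [abs_mul]
    have hg0 : 0 ≤ g p := ha.le.trans (hbd p).1
    have h1 : |g p| ≤ b := by rw [abs_of_nonneg hg0]; exact (hbd p).2
    exact mul_le_mul h1 (hubd p.2) (abs_nonneg _) (hg0.trans (hbd p).2)
  have hFint : Integrable (fun p : α × β => g p * u p.2) (μ1.prod μ2) :=
    integrable_bdd _ hFmeas hFbd
  have hswap : ∫ y, ∫ x, g (x, y) * u y ∂μ1 ∂μ2 = ∫ x, ∫ y, g (x, y) * u y ∂μ2 ∂μ1 :=
    (integral_integral_swap (by exact hFint)).symm
  have e3 : ∫ y, h y * u y ∂μ2 = ∫ y, ∫ x, g (x, y) * u y ∂μ1 ∂μ2 := by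
    congr 1; funext y
    rw [hh]
    exact (integral_mul_const _ _).symm
  -- pointwise duality bound
  have hpt : ∀ x, ∫ y, g (x, y) * u y ∂μ2 ≤ ent μ2 (fun y => g (x, y)) := fun x =>
    integral_mul_le_ent μ2 (hg.comp measurable_prodMk_left) ha (fun y => hbd (x, y))
      humeas hubd hexp
  have hlhs_int : Integrable (fun x => ∫ y, g (x, y) * u y ∂μ2) μ1 := by
    apply integrable_bdd _ (hFmeas.stronglyMeasurable.integral_prod_right'.measurable)
      (C := b * (2 * (|Real.log a| + |Real.log b|)))
    intro x
    have := norm_integral_le_of_norm_le_const (μ := μ2)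
      (f := fun y => g (x, y) * u y) (C := b * (2 * (|Real.log a| + |Real.log b|)))
      (ae_of_all _ fun y => by rw [Real.norm_eq_abs]; exact hFbd (x, y))
    simpa using this
  have hrhs_int : Integrable (fun x => ent μ2 (fun y => g (x, y))) μ1 :=
    integrable_bdd _ (measurable_ent_right μ2 hg)
      (fun x => abs_ent_le μ2 (hg.comp measurable_prodMk_left) ha (fun y => hbd (x, y)))
  calc ent μ2 h = ∫ y, h y * u y ∂μ2 := hent_eq
    _ = ∫ x, ∫ y, g (x, y) * u y ∂μ2 ∂μ1 := by rw [e3, hswap]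
    _ ≤ ∫ x, ent μ2 (fun y => g (x, y)) ∂μ1 := integral_mono hlhs_int hrhs_int hpt

end EntProd
section Tensor
open MeasureTheory Real

lemma ent_tensor : ∀ (n : ℕ) (ν : Fin n → Measure ℝ), (∀ i, IsProbabilityMeasure (ν i)) →
    ∀ (g : (Fin n → ℝ) → ℝ), Measurable g → ∀ (a b : ℝ), 0 < a →
    (∀ x, g x ∈ Set.Icc a b) →
    ent (Measure.pi ν) g
      ≤ ∑ i, ∫ x, ent (ν i) (fun y => g (Function.update x i y)) ∂(Measure.pi ν) := by
  intro n
  induction n with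
  | zero =>
    intro ν hprob g hg a b ha hbd
    haveI := hprob
    have hgc : g = fun _ => g default := funext fun x => by rw [Subsingleton.elim x default]
    rw [hgc]
    simp [ent, integral_const, measure_univ]
  | succ n IH =>
    intro ν hprob g hg a b ha hbd
    haveI := hprob
    set ν' : Fin n → Measure ℝ := fun j => ν j.succ with hν'
    haveI : ∀ j, IsProbabilityMeasure (ν' j) := fun j => hprob _
    set T := MeasurableEquiv.piFinSuccAbove (fun _ : Fin (n+1) => ℝ) 0 with hT
    have hmp : MeasurePreserving T (Measure.pi ν) ((ν 0).prod (Measure.pi ν')) := by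
      have := measurePreserving_piFinSuccAbove ν 0
      convert this using 3
      funext j; simp [hν']
    have hmps : MeasurePreserving T.symm ((ν 0).prod (Measure.pi ν')) (Measure.pi ν) :=
      hmp.symm T
    set G : ℝ × (Fin n → ℝ) → ℝ := fun p => g (T.symm p) with hG
    have hGmeas : Measurable G := hg.comp T.symm.measurable
    have hGbd : ∀ p, G p ∈ Set.Icc a b := fun p => hbd _
    have hTsymm : ∀ p : ℝ × (Fin n → ℝ), T.symm p = Fin.cons p.1 p.2 := fun p => by
      rw [hT]
      show (MeasurableEquiv.piFinSuccAbove (fun _ : Fin (n+1) => ℝ) 0).symm p = _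
      simp [MeasurableEquiv.piFinSuccAbove, Fin.insertNthEquiv, Fin.insertNth_zero]
    -- transport ent
    have h1 : ent (Measure.pi ν) g = ent ((ν 0).prod (Measure.pi ν')) G := by
      simp only [ent]
      rw [← hmps.integral_comp' g, ← hmps.integral_comp' (fun x => g x * Real.log (g x))]
    -- chain rule
    have h2 : ent ((ν 0).prod (Measure.pi ν')) G
        = (∫ y, ent (ν 0) (fun x => G (x, y)) ∂(Measure.pi ν'))
          + ent (Measure.pi ν') (fun y => ∫ x, G (x, y) ∂(ν 0)) :=
      ent_prod (ν 0) (Measure.pi ν') hGmeas ha hGbd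
    set h : (Fin n → ℝ) → ℝ := fun y => ∫ x, G (x, y) ∂(ν 0) with hh
    have hhmeas : Measurable h := hGmeas.stronglyMeasurable.integral_prod_left'.measurable
    have hhbd : ∀ y, h y ∈ Set.Icc a b := fun y =>
      integral_mem_Icc (ν 0) (hGmeas.comp measurable_prodMk_right) (fun x => hGbd (x, y))
    -- IH
    have h3 : ent (Measure.pi ν') h
        ≤ ∑ i, ∫ x, ent (ν' i) (fun y => h (Function.update x i y)) ∂(Measure.pi ν') :=
      IH ν' (fun j => hprob _) h hhmeas a b ha hhbd
    -- per-coordinate convexity bound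
    have h4 : ∀ i : Fin n, ∀ x : Fin n → ℝ,
        ent (ν' i) (fun y => h (Function.update x i y))
          ≤ ∫ aa, ent (ν' i) (fun y => G (aa, Function.update x i y)) ∂(ν 0) := by
      intro i x
      have := ent_integral_le (ν 0) (ν' i)
        (g := fun q : ℝ × ℝ => G (q.1, Function.update x i q.2))
        (hGmeas.comp (measurable_fst.prodMk ((measurable_update x).comp measurable_snd)))
        ha (fun q => hGbd _)
      exact this
    -- measurability facts for the integral_mono
    have hEntConst : ℝ := 0
    have hF3meas : Measurable (fun q : ℝ × (Fin n → ℝ) =>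
        fun i : Fin n => (0:ℝ)) := measurable_const
    have h5 : ∀ i : Fin n,
        ∫ x, ent (ν' i) (fun y => h (Function.update x i y)) ∂(Measure.pi ν')
          ≤ ∫ x, ∫ aa, ent (ν' i) (fun y => G (aa, Function.update x i y)) ∂(ν 0)
              ∂(Measure.pi ν') := by
      intro i
      have hm1 : Measurable (fun x : Fin n → ℝ =>
          ent (ν' i) (fun y => h (Function.update x i y))) := by
        have : Measurable (fun q : (Fin n → ℝ) × ℝ => h (Function.update q.1 i q.2)) :=
          hhmeas.comp measurable_update'
        exact measurable_ent_right (ν' i) this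
      have hb1 : ∀ x, |ent (ν' i) (fun y => h (Function.update x i y))|
          ≤ 2 * (b * (|Real.log a| + |Real.log b|)) := fun x =>
        abs_ent_le (ν' i) (hhmeas.comp (measurable_update x)) ha (fun y => hhbd _)
      have hFmeas : Measurable (fun q : ℝ × (Fin n → ℝ) =>
          ent (ν' i) (fun y => G (q.1, Function.update q.2 i y))) := by
        have : Measurable (fun r : (ℝ × (Fin n → ℝ)) × ℝ =>
            G (r.1.1, Function.update r.1.2 i r.2)) :=
          hGmeas.comp ((measurable_fst.comp measurable_fst).prodMk
            (measurable_update'.comp ((measurable_snd.comp measurable_fst).prodMk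
              measurable_snd)))
        exact measurable_ent_right (ν' i) this
      have hFbd : ∀ q : ℝ × (Fin n → ℝ),
          |ent (ν' i) (fun y => G (q.1, Function.update q.2 i y))|
            ≤ 2 * (b * (|Real.log a| + |Real.log b|)) := fun q =>
        abs_ent_le (ν' i) (hGmeas.comp (measurable_const.prodMk (measurable_update q.2)))
          ha (fun y => hGbd _)
      have hm2 : Measurable (fun x : Fin n → ℝ =>
          ∫ aa, ent (ν' i) (fun y => G (aa, Function.update x i y)) ∂(ν 0)) :=
        hFmeas.stronglyMeasurable.integral_prod_left'.measurable
      have hb2 : ∀ x, |∫ aa, ent (ν' i) (fun y => G (aa, Function.update x i y)) ∂(ν 0)|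
          ≤ 2 * (b * (|Real.log a| + |Real.log b|)) := fun x => by
        have := norm_integral_le_of_norm_le_const (μ := ν 0)
          (f := fun aa => ent (ν' i) (fun y => G (aa, Function.update x i y)))
          (C := 2 * (b * (|Real.log a| + |Real.log b|)))
          (ae_of_all _ fun aa => by rw [Real.norm_eq_abs]; exact hFbd (aa, x))
        simpa using this
      exact integral_mono (integrable_bdd _ hm1 hb1) (integrable_bdd _ hm2 hb2) (h4 i)
    -- transport of the RHS terms
    have hTerm0 : ∫ x, ent (ν 0) (fun y => g (Function.update x 0 y)) ∂(Measure.pi ν)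
        = ∫ y, ent (ν 0) (fun x => G (x, y)) ∂(Measure.pi ν') := by
      rw [← hmps.integral_comp' (fun x => ent (ν 0) (fun y => g (Function.update x 0 y)))]
      have hptw : ∀ p : ℝ × (Fin n → ℝ),
          ent (ν 0) (fun y => g (Function.update (T.symm p) 0 y))
            = ent (ν 0) (fun x => G (x, p.2)) := by
        intro p
        congr 1
        funext y
        rw [hTsymm p, Fin.update_cons_zero]
        show g _ = g (T.symm (y, p.2))
        rw [hTsymm]
      rw [integral_congr_ae (ae_of_all _ hptw)]
      have hsnd : Measure.map Prod.snd ((ν 0).prod (Measure.pi ν')) = Measure.pi ν' := by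
        rw [Measure.map_snd_prod, measure_univ, one_smul]
      conv_rhs => rw [← hsnd]
      rw [integral_map measurable_snd.aemeasurable
        ((measurable_ent_left (ν 0) hGmeas).aestronglyMeasurable)]
    have hTermSucc : ∀ i : Fin n,
        ∫ x, ent (ν i.succ) (fun y => g (Function.update x i.succ y)) ∂(Measure.pi ν)
          = ∫ x, ∫ aa, ent (ν' i) (fun y => G (aa, Function.update x i y)) ∂(ν 0)
              ∂(Measure.pi ν') := by
      intro i
      rw [← hmps.integral_comp' (fun x => ent (ν i.succ) (fun y => g (Function.update x i.succ y)))]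
      have hptw : ∀ p : ℝ × (Fin n → ℝ),
          ent (ν i.succ) (fun y => g (Function.update (T.symm p) i.succ y))
            = ent (ν' i) (fun y => G (p.1, Function.update p.2 i y)) := by
        intro p
        have hνeq : ν i.succ = ν' i := rfl
        rw [hνeq]
        congr 1
        funext y
        rw [hTsymm p, ← Fin.cons_update]
        show g _ = g (T.symm (p.1, Function.update p.2 i y))
        rw [hTsymm]
      rw [integral_congr_ae (ae_of_all _ hptw)]
      -- Fubini
      have hFmeas : Measurable (fun q : ℝ × (Fin n → ℝ) =>
          ent (ν' i) (fun y => G (q.1, Function.update q.2 i y))) := by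
        have : Measurable (fun r : (ℝ × (Fin n → ℝ)) × ℝ =>
            G (r.1.1, Function.update r.1.2 i r.2)) :=
          hGmeas.comp ((measurable_fst.comp measurable_fst).prodMk
            (measurable_update'.comp ((measurable_snd.comp measurable_fst).prodMk
              measurable_snd)))
        exact measurable_ent_right (ν' i) this
      have hFbd : ∀ q : ℝ × (Fin n → ℝ),
          |ent (ν' i) (fun y => G (q.1, Function.update q.2 i y))|
            ≤ 2 * (b * (|Real.log a| + |Real.log b|)) := fun q =>
        abs_ent_le (ν' i) (hGmeas.comp (measurable_const.prodMk (measurable_update q.2)))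
          ha (fun y => hGbd _)
      exact integral_prod_symm _ (integrable_bdd _ hFmeas hFbd)
    -- assemble
    rw [Fin.sum_univ_succ, hTerm0]
    calc ent (Measure.pi ν) g
        = (∫ y, ent (ν 0) (fun x => G (x, y)) ∂(Measure.pi ν')) + ent (Measure.pi ν') h := by
          rw [h1, h2]
      _ ≤ (∫ y, ent (ν 0) (fun x => G (x, y)) ∂(Measure.pi ν'))
          + ∑ i, ∫ x, ∫ aa, ent (ν' i) (fun y => G (aa, Function.update x i y)) ∂(ν 0)
              ∂(Measure.pi ν') := by
          have := h3.trans (Finset.sum_le_sum (fun i _ => h5 i))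
          linarith
      _ = _ := by
          congr 1
          apply Finset.sum_congr rfl
          intro i _
          exact (hTermSucc i).symm

end Tensor
section OneCoord
open MeasureTheory Real

variable {X : Type*} [MeasurableSpace X] (ρ : Measure X) [IsProbabilityMeasure ρ]

lemma ent_le_sub {G : X → ℝ} (hG : Measurable G) {a b : ℝ} (ha : 0 < a)
    (hbd : ∀ x, G x ∈ Set.Icc a b) {s' : ℝ} (hs' : 0 < s') :
    ent ρ G ≤ ∫ x, (G x * Real.log (G x) - G x * Real.log s' - G x + s') ∂ρ := by
  have hGint : Integrable G ρ := integrable_bdd ρ hG (fun x => by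
    rw [abs_of_nonneg (ha.le.trans (hbd x).1)]; exact (hbd x).2)
  have hGlogint : Integrable (fun x => G x * Real.log (G x)) ρ :=
    integrable_bdd ρ (hG.mul hG.log) (fun x => glogg_abs_le ha (hbd x))
  have e1 : ∫ x, (G x * Real.log (G x) - G x * Real.log s' - G x + s') ∂ρ
      = (∫ x, G x * Real.log (G x) ∂ρ) - (∫ x, G x ∂ρ) * Real.log s' - (∫ x, G x ∂ρ) + s' := by
    have e2 : ∫ x, (G x * Real.log (G x) - G x * Real.log s' - G x + s') ∂ρ
        = (∫ x, (G x * Real.log (G x) - G x * Real.log s' - G x) ∂ρ) + ∫ x, (s' : ℝ) ∂ρ :=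
      integral_add ((hGlogint.sub (hGint.mul_const _)).sub hGint) (integrable_const _)
    have e3 : ∫ x, (G x * Real.log (G x) - G x * Real.log s' - G x) ∂ρ
        = (∫ x, (G x * Real.log (G x) - G x * Real.log s') ∂ρ) - ∫ x, G x ∂ρ :=
      integral_sub (hGlogint.sub (hGint.mul_const _)) hGint
    have e4 : ∫ x, (G x * Real.log (G x) - G x * Real.log s') ∂ρ
        = (∫ x, G x * Real.log (G x) ∂ρ) - ∫ x, G x * Real.log s' ∂ρ :=
      integral_sub hGlogint (hGint.mul_const _)
    have e5 : ∫ x, G x * Real.log s' ∂ρ = (∫ x, G x ∂ρ) * Real.log s' := integral_mul_const _ _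
    have e6 : ∫ x, (s' : ℝ) ∂ρ = s' := by simp
    rw [e2, e3, e4, e5, e6]
  rw [e1]
  have hm := integral_mem_Icc ρ hG hbd
  have hm0 : 0 < ∫ x, G x ∂ρ := ha.trans_le hm.1
  have := mlogm_ineq hm0 hs'
  simp only [ent]
  linarith

lemma ent_one_coord {V : ℝ → ℝ} (hV : Measurable V) {B : ℝ}
    (hVbd : ∀ y, V y ∈ Set.Icc 0 B) {s : ℝ} (hs : ∀ y, V y - s ∈ Set.Icc 0 1)
    {lam : ℝ} (hlam : 0 < lam) (ρ' : Measure ℝ) [IsProbabilityMeasure ρ'] :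
    ent ρ' (fun y => Real.exp (lam * V y))
      ≤ (Real.exp (-lam) - 1 + lam) * ∫ y, (V y - s) * Real.exp (lam * V y) ∂ρ' := by
  have hGmeas : Measurable (fun y => Real.exp (lam * V y)) := (hV.const_mul lam).exp
  have hGbd : ∀ y, Real.exp (lam * V y) ∈ Set.Icc 1 (Real.exp (lam * B)) := fun y => by
    constructor
    · rw [show (1:ℝ) = Real.exp 0 by simp]
      exact Real.exp_le_exp.2 (mul_nonneg hlam.le (hVbd y).1)
    · exact Real.exp_le_exp.2 (mul_le_mul_of_nonneg_left (hVbd y).2 hlam.le)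
  have h1 := ent_le_sub ρ' hGmeas one_pos hGbd (s' := Real.exp (lam * s)) (Real.exp_pos _)
  -- pointwise bound on the integrand
  have hpt : ∀ y, Real.exp (lam * V y) * Real.log (Real.exp (lam * V y))
      - Real.exp (lam * V y) * Real.log (Real.exp (lam * s)) - Real.exp (lam * V y)
      + Real.exp (lam * s)
      ≤ (Real.exp (-lam) - 1 + lam) * ((V y - s) * Real.exp (lam * V y)) := by
    intro y
    set d := V y - s with hd
    have hd0 : 0 ≤ d := (hs y).1
    have hd1 : d ≤ 1 := (hs y).2
    have hE : Real.exp (lam * s) = Real.exp (lam * V y) * Real.exp (-(lam * d)) := by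
      rw [← Real.exp_add]; congr 1; rw [hd]; ring
    rw [Real.log_exp, Real.log_exp, hE]
    have hinterp : Real.exp (d * (-lam)) ≤ 1 - d + d * Real.exp (-lam) := exp_interp hd0 hd1
    have hexp0 : 0 < Real.exp (lam * V y) := Real.exp_pos _
    have key : lam * V y - lam * s - 1 + Real.exp (-(lam * d))
        ≤ (Real.exp (-lam) - 1 + lam) * d := by
      have h2 : Real.exp (-(lam * d)) = Real.exp (d * (-lam)) := by ring_nf
      rw [h2]
      have h3 : lam * V y - lam * s = lam * d := by rw [hd]; ring
      rw [h3]
      nlinarith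
    nlinarith [mul_le_mul_of_nonneg_left key hexp0.le]
  have hIbd : ∀ y : ℝ, |(V y - s) * Real.exp (lam * V y)| ≤ Real.exp (lam * B) := fun y => by
    rw [abs_mul, abs_of_nonneg (Real.exp_pos _).le]
    have h1' : |V y - s| ≤ 1 := by rw [abs_of_nonneg (hs y).1]; exact (hs y).2
    calc |V y - s| * Real.exp (lam * V y) ≤ 1 * Real.exp (lam * B) := by
          apply mul_le_mul h1' (hGbd y).2 (Real.exp_pos _).le zero_le_one
      _ = Real.exp (lam * B) := one_mul _
  have hImeas : Measurable (fun y => (V y - s) * Real.exp (lam * V y)) :=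
    (hV.sub measurable_const).mul hGmeas
  have hLmeas : Measurable (fun y => Real.exp (lam * V y) * Real.log (Real.exp (lam * V y))
      - Real.exp (lam * V y) * Real.log (Real.exp (lam * s)) - Real.exp (lam * V y)
      + Real.exp (lam * s)) := by
    exact (((hGmeas.mul hGmeas.log).sub (hGmeas.mul_const _)).sub hGmeas).add_const _
  have hLbd : ∀ y, |Real.exp (lam * V y) * Real.log (Real.exp (lam * V y))
      - Real.exp (lam * V y) * Real.log (Real.exp (lam * s)) - Real.exp (lam * V y)
      + Real.exp (lam * s)|
      ≤ Real.exp (lam*B) * (lam*B) + Real.exp (lam*B) * (lam*|s|) + Real.exp (lam*B)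
        + Real.exp (lam*|s|) := fun y => by
    rw [Real.log_exp, Real.log_exp]
    have h1' := (hGbd y).1
    have h2' := (hGbd y).2
    have hV0 := (hVbd y).1
    have hVB := (hVbd y).2
    have e0 : (0:ℝ) < Real.exp (lam * V y) := Real.exp_pos _
    have a1 : |Real.exp (lam * V y) * (lam * V y)| ≤ Real.exp (lam*B) * (lam*B) := by
      rw [abs_mul, abs_of_nonneg e0.le, abs_of_nonneg (mul_nonneg hlam.le hV0)]
      apply mul_le_mul h2' (by nlinarith) (by nlinarith) (Real.exp_pos _).le
    have a2 : |Real.exp (lam * V y) * (lam * s)| ≤ Real.exp (lam*B) * (lam*|s|) := by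
      rw [abs_mul, abs_of_nonneg e0.le, abs_mul, abs_of_nonneg hlam.le]
      apply mul_le_mul h2' le_rfl (by positivity) (Real.exp_pos _).le
    have a3 : |Real.exp (lam * V y)| ≤ Real.exp (lam * B) := by
      rw [abs_of_nonneg e0.le]; exact h2'
    have a4 : |Real.exp (lam * s)| ≤ Real.exp (lam * |s|) := by
      rw [abs_of_nonneg (Real.exp_pos _).le]
      exact Real.exp_le_exp.2 (by nlinarith [le_abs_self s])
    calc |Real.exp (lam * V y) * (lam * V y) - Real.exp (lam * V y) * (lam * s)
          - Real.exp (lam * V y) + Real.exp (lam * s)|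
        ≤ |Real.exp (lam * V y) * (lam * V y)| + |Real.exp (lam * V y) * (lam * s)|
          + |Real.exp (lam * V y)| + |Real.exp (lam * s)| := by
          calc _ ≤ |Real.exp (lam * V y) * (lam * V y) - Real.exp (lam * V y) * (lam * s)
                - Real.exp (lam * V y)| + |Real.exp (lam * s)| := abs_add_le _ _
            _ ≤ _ := by
                have := abs_sub (Real.exp (lam * V y) * (lam * V y)
                  - Real.exp (lam * V y) * (lam * s)) (Real.exp (lam * V y))
                have := abs_sub (Real.exp (lam * V y) * (lam * V y))
                  (Real.exp (lam * V y) * (lam * s))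
                linarith
      _ ≤ _ := by linarith
  calc ent ρ' (fun y => Real.exp (lam * V y)) ≤ _ := h1
    _ ≤ ∫ y, (Real.exp (-lam) - 1 + lam) * ((V y - s) * Real.exp (lam * V y)) ∂ρ' := by
        apply integral_mono (integrable_bdd _ hLmeas hLbd) _ hpt
        exact (integrable_bdd _ hImeas hIbd).const_mul _
    _ = _ := integral_const_mul _ _

end OneCoord
section UpdateInt
open MeasureTheory Real

lemma integral_update_eq {n : ℕ} (ν : Fin (n+1) → Measure ℝ)
    [∀ i, IsProbabilityMeasure (ν i)] (i : Fin (n+1))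
    {f : (Fin (n+1) → ℝ) → ℝ} (hf : Measurable f) {C : ℝ} (hbd : ∀ x, |f x| ≤ C) :
    ∫ x, (∫ y, f (Function.update x i y) ∂(ν i)) ∂(Measure.pi ν)
      = ∫ x, f x ∂(Measure.pi ν) := by
  set T := MeasurableEquiv.piFinSuccAbove (fun _ : Fin (n+1) => ℝ) i with hT
  set νr : Fin n → Measure ℝ := fun j => ν (i.succAbove j) with hνr
  haveI : ∀ j, IsProbabilityMeasure (νr j) := fun j => by rw [hνr]; infer_instance
  have hmp : MeasurePreserving T (Measure.pi ν) ((ν i).prod (Measure.pi νr)) :=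
    measurePreserving_piFinSuccAbove ν i
  have hmps : MeasurePreserving T.symm ((ν i).prod (Measure.pi νr)) (Measure.pi ν) :=
    hmp.symm T
  have hTsymm : ∀ p : ℝ × (Fin n → ℝ), T.symm p = i.insertNth p.1 p.2 := fun p => by
    rw [hT]
    rfl
  have hupd : ∀ (p : ℝ × (Fin n → ℝ)) (y : ℝ),
      Function.update (T.symm p) i y = T.symm (y, p.2) := fun p y => by
    rw [hTsymm, hTsymm, Fin.update_insertNth]
  -- LHS transport
  have hL : ∫ x, (∫ y, f (Function.update x i y) ∂(ν i)) ∂(Measure.pi ν)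
      = ∫ p, (∫ y, f (T.symm (y, p.2)) ∂(ν i)) ∂((ν i).prod (Measure.pi νr)) := by
    rw [← hmps.integral_comp' (fun x => ∫ y, f (Function.update x i y) ∂(ν i))]
    congr 1
    funext p
    congr 1
    funext y
    rw [hupd]
  -- θ as a function of the second coordinate
  set θ : (Fin n → ℝ) → ℝ := fun r => ∫ y, f (T.symm (y, r)) ∂(ν i) with hθ
  have hfT : Measurable (fun q : ℝ × (Fin n → ℝ) => f (T.symm q)) :=
    hf.comp T.symm.measurable
  have hθmeas : Measurable θ := hfT.stronglyMeasurable.integral_prod_left'.measurable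
  have hθbd : ∀ r, |θ r| ≤ C := fun r => by
    have := norm_integral_le_of_norm_le_const (μ := ν i)
      (f := fun y => f (T.symm (y, r))) (C := C)
      (ae_of_all _ fun y => by rw [Real.norm_eq_abs]; exact hbd _)
    simpa using this
  have hsnd : Measure.map Prod.snd ((ν i).prod (Measure.pi νr)) = Measure.pi νr := by
    rw [Measure.map_snd_prod, measure_univ, one_smul]
  have hL2 : ∫ p, θ p.2 ∂((ν i).prod (Measure.pi νr)) = ∫ r, θ r ∂(Measure.pi νr) := by
    conv_rhs => rw [← hsnd]
    rw [integral_map measurable_snd.aemeasurable hθmeas.aestronglyMeasurable]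
  -- RHS transport
  have hR : ∫ x, f x ∂(Measure.pi ν) = ∫ r, θ r ∂(Measure.pi νr) := by
    rw [← hmps.integral_comp' f]
    exact integral_prod_symm _ (integrable_bdd _ hfT (fun q => hbd _))
  rw [hL, hR]
  exact hL2

end UpdateInt

section EntExp
open MeasureTheory Real

lemma ent_exp_le (n : ℕ) (ν : Fin n → Measure ℝ) (hprob : ∀ i, IsProbabilityMeasure (ν i))
    (Z : (Fin n → ℝ) → ℝ) (hZ : Measurable Z) (B : ℝ)
    (hZbd : ∀ x, Z x ∈ Set.Icc 0 B)
    (hmono : ∀ x i, Z (Function.update x i 0) ≤ Z x)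
    (hlip : ∀ x i, Z x - Z (Function.update x i 0) ≤ 1)
    (hsb : ∀ x, (∑ i, (Z x - Z (Function.update x i 0))) ≤ Z x)
    {lam : ℝ} (hlam : 0 < lam) :
    ent (Measure.pi ν) (fun x => Real.exp (lam * Z x))
      ≤ (Real.exp (-lam) - 1 + lam) * ∫ x, Z x * Real.exp (lam * Z x) ∂(Measure.pi ν) := by
  haveI := hprob
  have hpsi : 0 ≤ Real.exp (-lam) - 1 + lam := by nlinarith [Real.add_one_le_exp (-lam)]
  have hInn : 0 ≤ ∫ x, Z x * Real.exp (lam * Z x) ∂(Measure.pi ν) :=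
    integral_nonneg (fun x => mul_nonneg (hZbd x).1 (Real.exp_pos _).le)
  cases n with
  | zero =>
    have hgc : (fun x : Fin 0 → ℝ => Real.exp (lam * Z x))
        = fun _ => Real.exp (lam * Z default) := funext fun x => by
      rw [Subsingleton.elim x default]
    rw [hgc]
    have : ent (Measure.pi ν) (fun _ => Real.exp (lam * Z default)) = 0 := by
      simp [ent, integral_const, measure_univ]
    rw [this]
    positivity
  | succ m =>
    set Pi := Measure.pi ν with hPi
    have hB0 : 0 ≤ B := le_trans (hZbd (fun _ => 0)).1 (hZbd (fun _ => 0)).2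
    have hgmeas : Measurable (fun x => Real.exp (lam * Z x)) := (hZ.const_mul lam).exp
    have hgbd : ∀ x, Real.exp (lam * Z x) ∈ Set.Icc 1 (Real.exp (lam * B)) := fun x => by
      constructor
      · rw [show (1:ℝ) = Real.exp 0 by simp]
        exact Real.exp_le_exp.2 (mul_nonneg hlam.le (hZbd x).1)
      · exact Real.exp_le_exp.2 (mul_le_mul_of_nonneg_left (hZbd x).2 hlam.le)
    have htens := ent_tensor (m+1) ν hprob _ hgmeas 1 (Real.exp (lam * B)) one_pos hgbd
    -- per-coordinate bound, pointwise in x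
    have hcoord : ∀ (i : Fin (m+1)) (x : Fin (m+1) → ℝ),
        ent (ν i) (fun y => Real.exp (lam * Z (Function.update x i y)))
          ≤ (Real.exp (-lam) - 1 + lam)
            * ∫ y, (Z (Function.update x i y) - Z (Function.update x i 0))
                * Real.exp (lam * Z (Function.update x i y)) ∂(ν i) := by
      intro i x
      apply ent_one_coord (V := fun y => Z (Function.update x i y))
        (hZ.comp (measurable_update x))
        (B := B) (fun y => hZbd _) (s := Z (Function.update x i 0))
        (fun y => by
          constructor
          · have := hmono (Function.update x i y) i
            rw [Function.update_idem] at this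
            linarith
          · have := hlip (Function.update x i y) i
            rw [Function.update_idem] at this
            linarith)
        hlam
    -- F i z := (Z z - Z (update z i 0)) * exp (lam * Z z)
    have hFmeas : ∀ i : Fin (m+1), Measurable (fun z : Fin (m+1) → ℝ =>
        (Z z - Z (Function.update z i 0)) * Real.exp (lam * Z z)) := fun i => by
      have hupd : Measurable (fun z : Fin (m+1) → ℝ => Z (Function.update z i 0)) := by
        apply hZ.comp
        have : Measurable (fun z : Fin (m+1) → ℝ => ((z, (0:ℝ)) : (Fin (m+1) → ℝ) × ℝ)) :=
          measurable_id.prodMk measurable_const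
        exact measurable_update'.comp this
      exact (hZ.sub hupd).mul (hZ.const_mul lam).exp
    have hFbd : ∀ (i : Fin (m+1)) (z : Fin (m+1) → ℝ),
        |(Z z - Z (Function.update z i 0)) * Real.exp (lam * Z z)|
          ≤ Real.exp (lam * B) := fun i z => by
      rw [abs_mul, abs_of_nonneg (Real.exp_pos _).le]
      have h1 : |Z z - Z (Function.update z i 0)| ≤ 1 := by
        rw [abs_of_nonneg (by linarith [hmono z i])]
        exact hlip z i
      calc _ ≤ 1 * Real.exp (lam * B) :=
            mul_le_mul h1 (hgbd z).2 (Real.exp_pos _).le zero_le_one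
        _ = _ := one_mul _
    -- update-integration identity per coordinate
    have hupdint : ∀ i : Fin (m+1),
        ∫ x, (∫ y, (Z (Function.update x i y) - Z (Function.update x i 0))
            * Real.exp (lam * Z (Function.update x i y)) ∂(ν i)) ∂Pi
          = ∫ z, (Z z - Z (Function.update z i 0)) * Real.exp (lam * Z z) ∂Pi := by
      intro i
      have := integral_update_eq ν i (hFmeas i) (hbd := hFbd i)
      rw [← this]
      congr 1
      funext x
      congr 1
      funext y
      rw [Function.update_idem]
    -- integrate the per-coordinate bound
    have hint1 : ∀ i : Fin (m+1),
        ∫ x, ent (ν i) (fun y => Real.exp (lam * Z (Function.update x i y))) ∂Pi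
          ≤ (Real.exp (-lam) - 1 + lam)
            * ∫ z, (Z z - Z (Function.update z i 0)) * Real.exp (lam * Z z) ∂Pi := by
      intro i
      rw [← hupdint i, ← integral_const_mul]
      apply integral_mono
      · apply integrable_bdd _ _ (fun x =>
          abs_ent_le (ν i) (hgmeas.comp (measurable_update x)) one_pos (fun y => hgbd _))
        have : Measurable (fun q : (Fin (m+1) → ℝ) × ℝ =>
            Real.exp (lam * Z (Function.update q.1 i q.2))) :=
          (( hZ.comp measurable_update').const_mul lam).exp
        exact measurable_ent_right (ν i) this
      · apply Integrable.const_mul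
        have hq : Measurable (fun q : (Fin (m+1) → ℝ) × ℝ =>
            (Z (Function.update q.1 i q.2) - Z (Function.update q.1 i 0))
              * Real.exp (lam * Z (Function.update q.1 i q.2))) := by
          have h1 : Measurable (fun q : (Fin (m+1) → ℝ) × ℝ => Z (Function.update q.1 i q.2)) :=
            hZ.comp measurable_update'
          have h2 : Measurable (fun q : (Fin (m+1) → ℝ) × ℝ => Z (Function.update q.1 i 0)) := by
            apply hZ.comp
            exact measurable_update'.comp (measurable_fst.prodMk measurable_const)
          exact (h1.sub h2).mul (h1.const_mul lam).exp
        have hqm : Measurable (fun x : Fin (m+1) → ℝ =>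
            ∫ y, (Z (Function.update x i y) - Z (Function.update x i 0))
              * Real.exp (lam * Z (Function.update x i y)) ∂(ν i)) :=
          hq.stronglyMeasurable.integral_prod_right'.measurable
        have hqb : ∀ x : Fin (m+1) → ℝ,
            |∫ y, (Z (Function.update x i y) - Z (Function.update x i 0))
              * Real.exp (lam * Z (Function.update x i y)) ∂(ν i)| ≤ Real.exp (lam * B) := by
          intro x
          have := norm_integral_le_of_norm_le_const (μ := ν i)
            (f := fun y => (Z (Function.update x i y) - Z (Function.update x i 0))
              * Real.exp (lam * Z (Function.update x i y))) (C := Real.exp (lam * B))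
            (ae_of_all _ fun y => by
              rw [Real.norm_eq_abs]
              have := hFbd i (Function.update x i y)
              rw [Function.update_idem] at this
              exact this)
          simpa using this
        exact integrable_bdd _ hqm hqb
      · exact hcoord _
    -- sum up
    have hsum : ∑ i, ∫ x, ent (ν i) (fun y => Real.exp (lam * Z (Function.update x i y))) ∂Pi
        ≤ (Real.exp (-lam) - 1 + lam)
          * ∑ i, ∫ z, (Z z - Z (Function.update z i 0)) * Real.exp (lam * Z z) ∂Pi := by
      rw [Finset.mul_sum]
      exact Finset.sum_le_sum (fun i _ => hint1 i)
    have hsum2 : ∑ i, ∫ z, (Z z - Z (Function.update z i 0)) * Real.exp (lam * Z z) ∂Pi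
        = ∫ z, (∑ i, (Z z - Z (Function.update z i 0))) * Real.exp (lam * Z z) ∂Pi := by
      rw [← integral_finset_sum]
      · congr 1
        funext z
        rw [Finset.sum_mul]
      · exact fun i _ => integrable_bdd _ (hFmeas i) (hFbd i)
    have hsum3 : ∫ z, (∑ i, (Z z - Z (Function.update z i 0))) * Real.exp (lam * Z z) ∂Pi
        ≤ ∫ z, Z z * Real.exp (lam * Z z) ∂Pi := by
      apply integral_mono
      · have hm : Measurable (fun z : Fin (m+1) → ℝ =>
            (∑ i, (Z z - Z (Function.update z i 0))) * Real.exp (lam * Z z)) := by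
          apply Measurable.mul _ (hZ.const_mul lam).exp
          apply Finset.measurable_sum
          intro i _
          have hupd : Measurable (fun z : Fin (m+1) → ℝ => Z (Function.update z i 0)) :=
            hZ.comp (measurable_update'.comp (measurable_id.prodMk measurable_const))
          exact hZ.sub hupd
        apply integrable_bdd _ hm (C := (m+1) * Real.exp (lam * B))
        intro z
        rw [abs_mul, abs_of_nonneg (Real.exp_pos _).le]
        have h1 : |∑ i, (Z z - Z (Function.update z i 0))| ≤ (m+1) := by
          calc _ ≤ ∑ i : Fin (m+1), |Z z - Z (Function.update z i 0)| :=
                Finset.abs_sum_le_sum_abs _ _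
            _ ≤ ∑ _i : Fin (m+1), (1:ℝ) := Finset.sum_le_sum (fun i _ => by
                rw [abs_of_nonneg (by linarith [hmono z i])]; exact hlip z i)
            _ = (m+1) := by simp
        calc _ ≤ ((m:ℝ)+1) * Real.exp (lam * B) :=
              mul_le_mul h1 (hgbd z).2 (Real.exp_pos _).le (by positivity)
          _ = _ := by norm_num
      · apply integrable_bdd _ (hZ.mul (hZ.const_mul lam).exp) (C := B * Real.exp (lam * B))
        intro z
        rw [_root_.Pi.mul_apply, abs_mul, abs_of_nonneg (Real.exp_pos _).le, abs_of_nonneg (hZbd z).1]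
        exact mul_le_mul (hZbd z).2 (hgbd z).2 (Real.exp_pos _).le hB0
      · intro z
        exact mul_le_mul_of_nonneg_right (hsb z) (Real.exp_pos _).le
    calc ent Pi (fun x => Real.exp (lam * Z x)) ≤ _ := htens
      _ ≤ (Real.exp (-lam) - 1 + lam)
          * ∑ i, ∫ z, (Z z - Z (Function.update z i 0)) * Real.exp (lam * Z z) ∂Pi := hsum
      _ ≤ _ := by
          rw [hsum2]
          exact mul_le_mul_of_nonneg_left hsum3 hpsi

end EntExp
section Herbst
open MeasureTheory Real Filter Topology

variable {X : Type*} [MeasurableSpace X] (P : Measure X) [IsProbabilityMeasure P]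

lemma mgf_deriv {Z : X → ℝ} (hZ : Measurable Z) {B : ℝ} (hB : 0 ≤ B)
    (hZbd : ∀ x, Z x ∈ Set.Icc 0 B) (l : ℝ) :
    HasDerivAt (fun t => ∫ x, Real.exp (t * Z x) ∂P) (∫ x, Z x * Real.exp (l * Z x) ∂P) l := by
  have h := hasDerivAt_integral_of_dominated_loc_of_deriv_le
    (F := fun t x => Real.exp (t * Z x)) (F' := fun t x => Z x * Real.exp (t * Z x))
    (x₀ := l) (s := Metric.ball l 1) (bound := fun _ => B * Real.exp ((|l| + 1) * B))
    (μ := P) (Metric.ball_mem_nhds l one_pos) ?_ ?_ ?_ ?_ ?_ ?_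
  · exact h.2
  · exact Filter.Eventually.of_forall (fun t =>
      ((hZ.const_mul t).exp).aestronglyMeasurable)
  · exact integrable_bdd _ ((hZ.const_mul l).exp) (C := Real.exp (|l| * B)) (fun x => by
      rw [abs_of_nonneg (Real.exp_pos _).le]
      apply Real.exp_le_exp.2
      calc l * Z x ≤ |l| * Z x := mul_le_mul_of_nonneg_right (le_abs_self l) (hZbd x).1
        _ ≤ |l| * B := mul_le_mul_of_nonneg_left (hZbd x).2 (abs_nonneg l))
  · exact (hZ.mul ((hZ.const_mul l).exp)).aestronglyMeasurable
  · apply ae_of_all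
    intro x t ht
    rw [Real.norm_eq_abs, abs_mul, abs_of_nonneg (hZbd x).1, abs_of_nonneg (Real.exp_pos _).le]
    have h1 : t * Z x ≤ (|l| + 1) * B := by
      have ht' : |t| ≤ |l| + 1 := by
        have := abs_sub_abs_le_abs_sub t l
        have h2 : |t - l| < 1 := by
          have := Metric.mem_ball.1 ht
          simpa [Real.dist_eq] using this
        linarith
      calc t * Z x ≤ |t| * Z x := mul_le_mul_of_nonneg_right (le_abs_self t) (hZbd x).1
        _ ≤ (|l| + 1) * B :=
          mul_le_mul ht' (hZbd x).2 (hZbd x).1 (by positivity)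
    exact mul_le_mul (hZbd x).2 (Real.exp_le_exp.2 h1) (Real.exp_pos _).le hB
  · exact integrable_const _
  · apply ae_of_all
    intro x t _
    have h1 : HasDerivAt (fun t : ℝ => t * Z x) (Z x) t := hasDerivAt_mul_const (Z x)
    have := h1.exp
    simpa [mul_comm] using this

lemma herbst {Z : X → ℝ} (hZ : Measurable Z) {B : ℝ} (hB : 0 ≤ B)
    (hZbd : ∀ x, Z x ∈ Set.Icc 0 B)
    (hent : ∀ lam : ℝ, 0 < lam →
      (1 - Real.exp (-lam)) * ∫ x, Z x * Real.exp (lam * Z x) ∂P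
        ≤ (∫ x, Real.exp (lam * Z x) ∂P) * Real.log (∫ x, Real.exp (lam * Z x) ∂P))
    {t : ℝ} (ht : 0 < t) :
    Real.log (∫ x, Real.exp (t * Z x) ∂P)
      ≤ (Real.exp t - 1) * ∫ x, Z x ∂P := by
  set F : ℝ → ℝ := fun l => ∫ x, Real.exp (l * Z x) ∂P with hF
  set D : ℝ → ℝ := fun l => ∫ x, Z x * Real.exp (l * Z x) ∂P with hD
  have hFderiv : ∀ l, HasDerivAt F (D l) l := fun l => mgf_deriv P hZ hB hZbd l
  have hF1 : ∀ l, 0 ≤ l → 1 ≤ F l := by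
    intro l hl
    have : ∀ x, (1:ℝ) ≤ Real.exp (l * Z x) := fun x => by
      rw [show (1:ℝ) = Real.exp 0 by simp]
      exact Real.exp_le_exp.2 (mul_nonneg hl (hZbd x).1)
    have h2 := integral_mono (integrable_const (1:ℝ))
      (integrable_bdd P ((hZ.const_mul l).exp) (C := Real.exp (l * B)) (fun x => by
        rw [abs_of_nonneg (Real.exp_pos _).le]
        exact Real.exp_le_exp.2 (mul_le_mul_of_nonneg_left (hZbd x).2 hl))) this
    simpa using h2
  have hF0 : F 0 = 1 := by
    rw [hF]
    simp
  have hD0 : D 0 = ∫ x, Z x ∂P := by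
    rw [hD]
    simp
  set G : ℝ → ℝ := fun l => Real.log (F l) with hG
  have hGderiv : ∀ l, 0 ≤ l → HasDerivAt G (D l / F l) l := by
    intro l hl
    exact (hFderiv l).log (by linarith [hF1 l hl])
  set H : ℝ → ℝ := fun l => G l / (Real.exp l - 1) with hH
  -- H is antitone on (0, t]
  have hHanti : AntitoneOn H (Set.Ioc 0 t) := by
    apply antitoneOn_of_deriv_nonpos (convex_Ioc 0 t)
    · apply ContinuousOn.div
      · intro l hl
        exact ((hGderiv l hl.1.le).continuousAt).continuousWithinAt
      · exact (Real.continuous_exp.sub continuous_const).continuousOn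
      · intro l hl
        have : (1:ℝ) < Real.exp l := by
          rw [show (1:ℝ) = Real.exp 0 by simp]
          exact Real.exp_lt_exp.2 hl.1
        linarith
    · rw [interior_Ioc]
      intro l hl
      have hne : Real.exp l - 1 ≠ 0 := by
        have : (1:ℝ) < Real.exp l := by
          rw [show (1:ℝ) = Real.exp 0 by simp]
          exact Real.exp_lt_exp.2 hl.1
        linarith
      exact ((hGderiv l hl.1.le).div ((Real.hasDerivAt_exp l).sub_const 1) hne).differentiableAt.differentiableWithinAt
    · rw [interior_Ioc]
      intro l hl
      have hexp1 : (1:ℝ) < Real.exp l := by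
        rw [show (1:ℝ) = Real.exp 0 by simp]
        exact Real.exp_lt_exp.2 hl.1
      have hne : Real.exp l - 1 ≠ 0 := by linarith
      have hd : HasDerivAt H ((D l / F l * (Real.exp l - 1) - G l * Real.exp l)
          / (Real.exp l - 1)^2) l :=
        (hGderiv l hl.1.le).div ((Real.hasDerivAt_exp l).sub_const 1) hne
      rw [hd.deriv]
      apply div_nonpos_of_nonpos_of_nonneg _ (sq_nonneg _)
      -- key: from hent
      have hFpos : 0 < F l := by linarith [hF1 l hl.1.le]
      have hkey := hent l hl.1
      -- (1 - e^{-l}) * D l ≤ F l * G l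
      have h2 : D l / F l * (Real.exp l - 1) ≤ G l * Real.exp l := by
        have he : Real.exp l - 1 = Real.exp l * (1 - Real.exp (-l)) := by
          rw [mul_sub, mul_one, ← Real.exp_add]
          simp
        rw [he]
        have h3 : D l / F l * (Real.exp l * (1 - Real.exp (-l)))
            = Real.exp l * ((1 - Real.exp (-l)) * D l) / F l := by ring
        rw [h3]
        rw [div_le_iff₀ hFpos]
        calc Real.exp l * ((1 - Real.exp (-l)) * D l)
            ≤ Real.exp l * (F l * Real.log (F l)) := by
              apply mul_le_mul_of_nonneg_left hkey (Real.exp_pos _).le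
          _ = G l * Real.exp l * F l := by rw [hG]; ring
      linarith
  -- limit of H at 0+
  have hslope : Tendsto (fun l => G l / l) (nhdsWithin 0 (Set.Ioi 0)) (nhds (∫ x, Z x ∂P)) := by
    have h0 : HasDerivAt G (∫ x, Z x ∂P) 0 := by
      have := hGderiv 0 le_rfl
      rw [hF0, hD0] at this
      simpa using this
    have h1 := hasDerivAt_iff_tendsto_slope.1 h0
    have h2 : Tendsto (slope G 0) (nhdsWithin 0 (Set.Ioi 0)) (nhds (∫ x, Z x ∂P)) :=
      h1.mono_left (nhdsWithin_mono 0 (fun y hy => by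
        simp only [Set.mem_compl_iff, Set.mem_singleton_iff]
        exact ne_of_gt hy))
    apply h2.congr'
    apply eventually_nhdsWithin_of_forall
    intro l hl
    rw [slope_def_field]
    have hG0 : G 0 = 0 := by simp only [hG, hF0, Real.log_one]
    rw [hG0]
    simp only [sub_zero]
  have hslope2 : Tendsto (fun l => l / (Real.exp l - 1)) (nhdsWithin 0 (Set.Ioi 0)) (nhds 1) := by
    have h0 : HasDerivAt (fun l => Real.exp l - 1) 1 0 := by
      simpa using (Real.hasDerivAt_exp 0).sub_const 1
    have h1 := hasDerivAt_iff_tendsto_slope.1 h0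
    have h2 : Tendsto (slope (fun l => Real.exp l - 1) 0) (nhdsWithin 0 (Set.Ioi 0)) (nhds 1) :=
      h1.mono_left (nhdsWithin_mono 0 (fun y hy => ne_of_gt hy))
    have h3 : Tendsto (fun l => (Real.exp l - 1) / l) (nhdsWithin 0 (Set.Ioi 0)) (nhds 1) := by
      apply h2.congr'
      apply eventually_nhdsWithin_of_forall
      intro l hl
      rw [slope_def_field]
      simp
    have h4 := h3.inv₀ (by norm_num)
    rw [inv_one] at h4
    apply h4.congr'
    apply eventually_nhdsWithin_of_forall
    intro l hl
    show ((Real.exp l - 1) / l)⁻¹ = l / (Real.exp l - 1)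
    rw [inv_div]
  have hHlim : Tendsto H (nhdsWithin 0 (Set.Ioi 0)) (nhds (∫ x, Z x ∂P)) := by
    have := hslope.mul hslope2
    rw [mul_one] at this
    apply this.congr'
    apply eventually_nhdsWithin_of_forall
    intro l hl
    have hl0 : l ≠ 0 := ne_of_gt hl
    show G l / l * (l / (Real.exp l - 1)) = H l
    simp only [hH]
    rw [div_mul_div_comm, mul_comm (G l) l, mul_div_mul_left _ _ hl0]
  -- conclude
  have hHle : H t ≤ ∫ x, Z x ∂P := by
    apply ge_of_tendsto hHlim
    have hmem : Set.Ioc 0 t ∈ nhdsWithin (0:ℝ) (Set.Ioi 0) := by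
      rw [mem_nhdsWithin]
      exact ⟨Set.Iio t, isOpen_Iio, ht, fun y hy => ⟨hy.2, le_of_lt hy.1⟩⟩
    apply Filter.mem_of_superset hmem
    intro l hl
    exact hHanti hl ⟨ht, le_rfl⟩ hl.2
  have hexp1 : (1:ℝ) < Real.exp t := by
    rw [show (1:ℝ) = Real.exp 0 by simp]
    exact Real.exp_lt_exp.2 ht
  have := hHle
  rw [hH] at this
  rw [div_le_iff₀ (by linarith)] at this
  calc Real.log (F t) ≤ (∫ x, Z x ∂P) * (Real.exp t - 1) := this
    _ = (Real.exp t - 1) * ∫ x, Z x ∂P := by ring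

end Herbst
section Tail
open MeasureTheory ProbabilityTheory Real

lemma selfbounding_tail (n : ℕ) (ν : Fin n → Measure ℝ) (hprob : ∀ i, IsProbabilityMeasure (ν i))
    (Z : (Fin n → ℝ) → ℝ) (hZ : Measurable Z) (B : ℝ) (hB : 0 ≤ B)
    (hZbd : ∀ x, Z x ∈ Set.Icc 0 B)
    (hmono : ∀ x i, Z (Function.update x i 0) ≤ Z x)
    (hlip : ∀ x i, Z x - Z (Function.update x i 0) ≤ 1)
    (hsb : ∀ x, (∑ i, (Z x - Z (Function.update x i 0))) ≤ Z x)
    {δ : ℝ} (hδ : 1 < δ) :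
    ((Measure.pi ν) {x | δ * (∫ x, Z x ∂(Measure.pi ν)) ≤ Z x}).toReal
      ≤ Real.exp (-(δ * Real.log δ - δ + 1) * ∫ x, Z x ∂(Measure.pi ν)) := by
  haveI := hprob
  set P := Measure.pi ν with hP
  set m : ℝ := ∫ x, Z x ∂P with hm
  have hm0 : 0 ≤ m := integral_nonneg (fun x => (hZbd x).1)
  -- entropy hypothesis for herbst
  have hent : ∀ lam : ℝ, 0 < lam →
      (1 - Real.exp (-lam)) * ∫ x, Z x * Real.exp (lam * Z x) ∂P
        ≤ (∫ x, Real.exp (lam * Z x) ∂P) * Real.log (∫ x, Real.exp (lam * Z x) ∂P) := by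
    intro lam hlam
    have h1 := ent_exp_le n ν hprob Z hZ B hZbd hmono hlip hsb hlam
    have h2 : ∫ x, Real.exp (lam * Z x) * Real.log (Real.exp (lam * Z x)) ∂P
        = lam * ∫ x, Z x * Real.exp (lam * Z x) ∂P := by
      rw [← integral_const_mul]
      congr 1
      funext x
      rw [Real.log_exp]
      ring
    simp only [ent] at h1
    rw [h2] at h1
    linarith
  have hherbst := herbst P hZ hB hZbd hent (t := Real.log δ)
    (Real.log_pos hδ)
  -- Chernoff
  have hδ0 : (0:ℝ) < δ := lt_trans one_pos hδ
  have hexplog : Real.exp (Real.log δ) = δ := Real.exp_log hδ0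
  have hintexp : Integrable (fun x => Real.exp (Real.log δ * Z x)) P :=
    integrable_bdd _ ((hZ.const_mul _).exp) (C := Real.exp (Real.log δ * B)) (fun x => by
      rw [abs_of_nonneg (Real.exp_pos _).le]
      exact Real.exp_le_exp.2 (mul_le_mul_of_nonneg_left (hZbd x).2 (Real.log_pos hδ).le))
  have hcher := measure_ge_le_exp_mul_mgf (X := Z) (μ := P) (t := Real.log δ) (δ * m)
    (Real.log_pos hδ).le hintexp
  have hmgf : mgf Z P (Real.log δ) ≤ Real.exp ((δ - 1) * m) := by
    have h3 : Real.log (∫ x, Real.exp (Real.log δ * Z x) ∂P) ≤ (δ - 1) * m := by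
      have := hherbst
      rwa [hexplog] at this
    have hFpos : 0 < ∫ x, Real.exp (Real.log δ * Z x) ∂P := by
      have : ∀ x, (0:ℝ) < Real.exp (Real.log δ * Z x) := fun x => Real.exp_pos _
      have h4 : (1:ℝ) ≤ ∫ x, Real.exp (Real.log δ * Z x) ∂P := by
        have h5 : ∀ x, (1:ℝ) ≤ Real.exp (Real.log δ * Z x) := fun x => by
          rw [show (1:ℝ) = Real.exp 0 by simp]
          exact Real.exp_le_exp.2 (mul_nonneg (Real.log_pos hδ).le (hZbd x).1)
        have := integral_mono (integrable_const (1:ℝ)) hintexp h5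
        simpa using this
      linarith
    rw [show mgf Z P (Real.log δ) = ∫ x, Real.exp (Real.log δ * Z x) ∂P from rfl]
    calc ∫ x, Real.exp (Real.log δ * Z x) ∂P
        = Real.exp (Real.log (∫ x, Real.exp (Real.log δ * Z x) ∂P)) := (Real.exp_log hFpos).symm
      _ ≤ _ := Real.exp_le_exp.2 h3
  calc (P {x | δ * m ≤ Z x}).toReal
      ≤ Real.exp (-(Real.log δ) * (δ * m)) * mgf Z P (Real.log δ) := hcher
    _ ≤ Real.exp (-(Real.log δ) * (δ * m)) * Real.exp ((δ - 1) * m) :=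
        mul_le_mul_of_nonneg_left hmgf (Real.exp_pos _).le
    _ = Real.exp (-(δ * Real.log δ - δ + 1) * m) := by
        rw [← Real.exp_add]
        congr 1
        ring

end Tail
open MeasureTheory ProbabilityTheory Finset

/-- The optimum function `f(w) = max_{S ∈ 𝓕} Σ_{e ∈ S} w_e`. -/
noncomputable def fopt {E : Type*} (𝓕 : Finset (Finset E)) (h𝓕 : 𝓕.Nonempty)
    (w : E → ℝ) : ℝ :=
  𝓕.sup' h𝓕 (fun S => ∑ e ∈ S, w e)

/-- Let `τ > 0`, `(w_e)` mutually independent with `w_e ∈ [0,τ]` a.s.,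
`W := E[f(w)]`. Let `δ > 1`, `k ≥ 1`, `α ∈ (0,1]`, and
`c ≥ ((4 + 2δ)/(3(δ − 1)²)) · log(k/α)`. If `W > c·τ`, then `P[f(w) > δW] ≤ α/k`. -/
theorem blm_opt_tail
    {Ω : Type*} [MeasurableSpace Ω] (μ : Measure Ω) [IsProbabilityMeasure μ]
    {E : Type*} [Fintype E] [Nonempty E]
    (𝓕 : Finset (Finset E)) (h𝓕 : 𝓕.Nonempty)
    (hdc : ∀ S ∈ 𝓕, ∀ T ⊆ S, T ∈ 𝓕)
    (τ : ℝ) (hτ : 0 < τ)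
    (w : E → Ω → ℝ) (hmeas : ∀ e, Measurable (w e))
    (hindep : iIndepFun w μ)
    (hbd : ∀ e, ∀ᵐ ω ∂μ, w e ω ∈ Set.Icc 0 τ)
    (W : ℝ) (hW : W = ∫ ω, fopt 𝓕 h𝓕 (fun e => w e ω) ∂μ)
    (δ k α c : ℝ) (hδ : 1 < δ) (hk : 1 ≤ k) (hα : α ∈ Set.Ioc (0 : ℝ) 1)
    (hc : ((4 + 2 * δ) / (3 * (δ - 1) ^ 2)) * Real.log (k / α) ≤ c)
    (hWc : c * τ < W) :
    (μ {ω | δ * W < fopt 𝓕 h𝓕 (fun e => w e ω)}).toReal ≤ α / k := by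
  classical
  obtain ⟨hα0, hα1⟩ := hα
  set n := Fintype.card E with hn
  set σ : E ≃ Fin n := Fintype.equivFin E with hσ
  -- clamping
  set cl : ℝ → ℝ := fun r => max 0 (min r τ) with hcl
  have hclmeas : Measurable cl := measurable_const.max (measurable_id.min measurable_const)
  have hclbd : ∀ r, cl r ∈ Set.Icc 0 τ := fun r =>
    ⟨le_max_left _ _, max_le hτ.le (min_le_right _ _)⟩
  have hclid : ∀ r ∈ Set.Icc (0:ℝ) τ, cl r = r := fun r hr => by
    rw [hcl]
    simp only
    rw [min_eq_left hr.2, max_eq_right hr.1]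
  have hcl0 : cl 0 = 0 := hclid 0 ⟨le_rfl, hτ.le⟩
  set w' : E → Ω → ℝ := fun e ω => cl (w e ω) with hw'
  have hw'meas : ∀ e, Measurable (w' e) := fun e => hclmeas.comp (hmeas e)
  have hw'bd : ∀ e ω, w' e ω ∈ Set.Icc 0 τ := fun e ω => hclbd _
  have hae : ∀ᵐ ω ∂μ, ∀ e, w' e ω = w e ω := by
    rw [ae_all_iff]
    intro e
    filter_upwards [hbd e] with ω hω
    exact hclid _ hω
  have hindep' : iIndepFun w' μ :=
    hindep.comp (fun _ => cl) (fun _ => hclmeas)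
  -- marginals and joint law
  set ν : Fin n → Measure ℝ := fun i => μ.map (w' (σ.symm i)) with hν
  have hνprob : ∀ i, IsProbabilityMeasure (ν i) := fun i =>
    Measure.isProbabilityMeasure_map (hw'meas _).aemeasurable
  haveI := hνprob
  set vec : Ω → (Fin n → ℝ) := fun ω i => w' (σ.symm i) ω with hvec
  have hvecmeas : Measurable vec := measurable_pi_lambda _ (fun i => hw'meas _)
  have hjoint : μ.map vec = Measure.pi ν := by
    symm
    apply Measure.pi_eq
    intro s hs
    rw [Measure.map_apply hvecmeas (MeasurableSet.univ_pi hs)]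
    have hpre : vec ⁻¹' (Set.pi Set.univ s) = ⋂ e, (w' e) ⁻¹' (s (σ e)) := by
      ext ω
      simp only [Set.mem_preimage, Set.mem_pi, Set.mem_univ, forall_true_left, Set.mem_iInter]
      constructor
      · intro h e
        have h2 : w' (σ.symm (σ e)) ω ∈ s (σ e) := h (σ e)
        rwa [σ.symm_apply_apply] at h2
      · intro h i
        have h2 := h (σ.symm i)
        rw [σ.apply_symm_apply] at h2
        exact h2
    rw [hpre]
    have h2 : (⋂ e, (w' e) ⁻¹' (s (σ e))) = ⋂ e ∈ (Finset.univ : Finset E),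
        (w' e) ⁻¹' (s (σ e)) := by simp
    rw [h2, hindep'.measure_inter_preimage_eq_mul (S := Finset.univ)
      (sets := fun e => s (σ e)) (fun e _ => hs (σ e))]
    have h3 : ∀ i, ν i (s i) = μ ((w' (σ.symm i)) ⁻¹' (s i)) := fun i =>
      Measure.map_apply (hw'meas _) (hs i)
    rw [← Equiv.prod_comp σ (fun i => ν i (s i))]
    apply Finset.prod_congr rfl
    intro e _
    rw [h3 (σ e), σ.symm_apply_apply]
  -- the normalized optimum on the product space
  set N : (Fin n → ℝ) → ℝ := fun x => 𝓕.sup' h𝓕 (fun S => ∑ e ∈ S, cl (x (σ e))) with hN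
  set Z : (Fin n → ℝ) → ℝ := fun x => N x / τ with hZdef
  have hNmeas : Measurable N := by
    have hsup := Finset.measurable_sup' h𝓕
      (f := fun (S : Finset E) (x : Fin n → ℝ) => ∑ e ∈ S, cl (x (σ e)))
      (fun S _ => Finset.measurable_sum S (fun e _ => hclmeas.comp (measurable_pi_apply (σ e))))
    have heq : N = 𝓕.sup' h𝓕 (fun (S : Finset E) (x : Fin n → ℝ) => ∑ e ∈ S, cl (x (σ e))) := by
      funext x
      rw [hN, Finset.sup'_apply]
    rw [heq]
    exact hsup
  have hZmeas : Measurable Z := hNmeas.div_const τ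
  have hempty : ∅ ∈ 𝓕 := by
    obtain ⟨S0, hS0⟩ := h𝓕
    exact hdc S0 hS0 ∅ (Finset.empty_subset _)
  have hledef : ∀ (x : Fin n → ℝ) (S : Finset E), S ∈ 𝓕 → ∑ e ∈ S, cl (x (σ e)) ≤ N x := by
    intro x S hS
    exact Finset.le_sup' (f := fun S => ∑ e ∈ S, cl (x (σ e))) hS
  have hN0 : ∀ x, 0 ≤ N x := fun x => by
    have := hledef x ∅ hempty
    simpa using this
  have hNub : ∀ x, N x ≤ n * τ := fun x => by
    rw [hN]
    apply Finset.sup'_le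
    intro S _
    calc ∑ e ∈ S, cl (x (σ e)) ≤ ∑ _e ∈ S, τ := Finset.sum_le_sum (fun e _ => (hclbd _).2)
      _ = S.card * τ := by rw [Finset.sum_const, nsmul_eq_mul]
      _ ≤ n * τ := by
          apply mul_le_mul_of_nonneg_right _ hτ.le
          exact_mod_cast Finset.card_le_univ S
  have hZx : ∀ x, Z x = N x / τ := fun x => rfl
  have hZbd : ∀ x, Z x ∈ Set.Icc 0 (n : ℝ) := fun x => by
    rw [hZx]
    constructor
    · exact div_nonneg (hN0 x) hτ.le
    · rw [div_le_iff₀ hτ]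
      exact hNub x
  -- update interplay
  have hclupd : ∀ (x : Fin n → ℝ) (i : Fin n) (y : ℝ) (e : E),
      cl ((Function.update x i y) (σ e)) = if e = σ.symm i then cl y else cl (x (σ e)) := by
    intro x i y e
    rw [Function.update_apply]
    by_cases h : σ e = i
    · rw [if_pos h, if_pos]
      rw [← h, σ.symm_apply_apply]
    · rw [if_neg h, if_neg]
      intro hcon
      apply h
      rw [hcon, σ.apply_symm_apply]
  have hmax : ∀ x, ∃ S ∈ 𝓕, N x = ∑ e ∈ S, cl (x (σ e)) := fun x => by
    obtain ⟨S, hS, hval⟩ := Finset.exists_mem_eq_sup' h𝓕 (fun S => ∑ e ∈ S, cl (x (σ e)))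
    exact ⟨S, hS, hval⟩
  -- N (update x i 0) between N x - contribution and N x
  have hNmono : ∀ x i, N (Function.update x i 0) ≤ N x := by
    intro x i
    rw [hN]
    apply Finset.sup'_le
    intro S hS
    calc ∑ e ∈ S, cl ((Function.update x i 0) (σ e))
        ≤ ∑ e ∈ S, cl (x (σ e)) := by
          apply Finset.sum_le_sum
          intro e _
          rw [hclupd]
          by_cases h : e = σ.symm i
          · rw [if_pos h, hcl0]
            exact (hclbd _).1
          · rw [if_neg h]
      _ ≤ N x := hledef x S hS
  have hmono : ∀ x i, Z (Function.update x i 0) ≤ Z x := fun x i =>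
    (div_le_div_iff_of_pos_right hτ).2 (hNmono x i)
  have hlip : ∀ x i, Z x - Z (Function.update x i 0) ≤ 1 := by
    intro x i
    obtain ⟨S, hS, hNx⟩ := hmax x
    set e0 := σ.symm i with he0
    have hkey : N x ≤ (∑ e ∈ S.erase e0, cl (x (σ e))) + τ := by
      rw [hNx]
      by_cases he : e0 ∈ S
      · rw [← Finset.sum_erase_add S _ he]
        have := (hclbd (x (σ e0))).2
        linarith
      · rw [Finset.erase_eq_of_notMem he]
        linarith [hτ.le]
    have h2 : ∑ e ∈ S.erase e0, cl (x (σ e))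
        = ∑ e ∈ S.erase e0, cl ((Function.update x i 0) (σ e)) := by
      apply Finset.sum_congr rfl
      intro e he
      rw [hclupd x i 0 e, if_neg (Finset.ne_of_mem_erase he)]
    have h3 : ∑ e ∈ S.erase e0, cl ((Function.update x i 0) (σ e))
        ≤ N (Function.update x i 0) :=
      hledef _ _ (hdc S hS _ (Finset.erase_subset _ _))
    have h4 : N x ≤ N (Function.update x i 0) + τ := by
      rw [h2] at hkey
      linarith
    rw [hZx, hZx, div_sub_div_same, div_le_one hτ]
    linarith
  have hsb : ∀ x, (∑ i, (Z x - Z (Function.update x i 0))) ≤ Z x := by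
    intro x
    obtain ⟨S, hS, hNx⟩ := hmax x
    have hterm : ∀ i : Fin n, Z x - Z (Function.update x i 0)
        ≤ (if σ.symm i ∈ S then cl (x (σ (σ.symm i))) else 0) / τ := by
      intro i
      set e0 := σ.symm i with he0
      have hsum : ∑ e ∈ S, cl ((Function.update x i 0) (σ e))
          = (∑ e ∈ S, cl (x (σ e))) - (if e0 ∈ S then cl (x (σ e0)) else 0) := by
        by_cases he : e0 ∈ S
        · rw [if_pos he, ← Finset.sum_erase_add S _ he,
            ← Finset.sum_erase_add S (fun e => cl (x (σ e))) he]
          have hlast : cl ((Function.update x i 0) (σ e0)) = 0 := by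
            rw [hclupd x i 0 e0, if_pos rfl, hcl0]
          have hrest : ∑ e ∈ S.erase e0, cl ((Function.update x i 0) (σ e))
              = ∑ e ∈ S.erase e0, cl (x (σ e)) := by
            apply Finset.sum_congr rfl
            intro e he'
            rw [hclupd x i 0 e, if_neg (Finset.ne_of_mem_erase he')]
          rw [hlast, hrest]
          ring
        · rw [if_neg he, sub_zero]
          apply Finset.sum_congr rfl
          intro e he'
          rw [hclupd x i 0 e, if_neg]
          intro hcon
          apply he
          rw [he0, ← hcon]
          exact he'
      have h5 : N x - (if e0 ∈ S then cl (x (σ e0)) else 0) ≤ N (Function.update x i 0) := by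
        calc N x - (if e0 ∈ S then cl (x (σ e0)) else 0)
            = ∑ e ∈ S, cl ((Function.update x i 0) (σ e)) := by rw [hNx, hsum]
          _ ≤ N (Function.update x i 0) := hledef _ S hS
      rw [hZx, hZx, div_sub_div_same, div_le_div_iff₀ hτ hτ]
      nlinarith [hτ]
    calc ∑ i, (Z x - Z (Function.update x i 0))
        ≤ ∑ i : Fin n, (if σ.symm i ∈ S then cl (x (σ (σ.symm i))) else 0) / τ :=
          Finset.sum_le_sum (fun i _ => hterm i)
      _ = (∑ i : Fin n, (if σ.symm i ∈ S then cl (x (σ (σ.symm i))) else 0)) / τ :=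
          (Finset.sum_div _ _ _).symm
      _ = (∑ e : E, (if e ∈ S then cl (x (σ e)) else 0)) / τ := by
          congr 1
          exact Equiv.sum_comp σ.symm (fun e => if e ∈ S then cl (x (σ e)) else 0)
      _ = (∑ e ∈ S, cl (x (σ e))) / τ := by
          congr 1
          rw [Finset.sum_ite_mem, Finset.univ_inter]
      _ = Z x := by rw [hZx, hNx]
  -- identification with fopt
  have hZvec : ∀ ω, τ * Z (vec ω) = fopt 𝓕 h𝓕 (fun e => w' e ω) := by
    intro ω
    have hNvec : N (vec ω) = fopt 𝓕 h𝓕 (fun e => w' e ω) := by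
      rw [hN]
      rw [fopt]
      apply Finset.sup'_congr h𝓕 rfl
      intro S _
      apply Finset.sum_congr rfl
      intro e _
      show cl (w' (σ.symm (σ e)) ω) = w' e ω
      rw [σ.symm_apply_apply]
      exact hclid _ (hw'bd e ω)
    rw [hZx, ← hNvec]
    field_simp
  -- expectation identification
  have hWint : ∫ x, Z x ∂(Measure.pi ν) = W / τ := by
    rw [← hjoint, integral_map hvecmeas.aemeasurable hZmeas.aestronglyMeasurable]
    have h6 : ∀ ω, Z (vec ω) = fopt 𝓕 h𝓕 (fun e => w' e ω) / τ := fun ω => by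
      rw [← hZvec ω]
      field_simp
    rw [integral_congr_ae (ae_of_all _ h6), integral_div]
    congr 1
    rw [hW]
    apply integral_congr_ae
    filter_upwards [hae] with ω hω
    rw [fopt, fopt]
    apply Finset.sup'_congr h𝓕 rfl
    intro S _
    exact Finset.sum_congr rfl (fun e _ => hω e)
  set m : ℝ := ∫ x, Z x ∂(Measure.pi ν) with hm
  have hWτm : W = τ * m := by
    rw [hWint]
    field_simp
  -- event identification
  have hev1 : μ {ω | δ * W < fopt 𝓕 h𝓕 (fun e => w e ω)}
      = μ {ω | δ * W < fopt 𝓕 h𝓕 (fun e => w' e ω)} := by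
    apply measure_congr
    filter_upwards [hae] with ω hω
    have : fopt 𝓕 h𝓕 (fun e => w' e ω) = fopt 𝓕 h𝓕 (fun e => w e ω) := by
      rw [fopt, fopt]
      apply Finset.sup'_congr h𝓕 rfl
      intro S _
      exact Finset.sum_congr rfl (fun e _ => hω e)
    show (δ * W < fopt 𝓕 h𝓕 fun e => w e ω) = (δ * W < fopt 𝓕 h𝓕 fun e => w' e ω)
    rw [this]
  have hev2 : {ω | δ * W < fopt 𝓕 h𝓕 (fun e => w' e ω)}
      = vec ⁻¹' {x | δ * W < τ * Z x} := by
    ext ω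
    simp only [Set.mem_setOf_eq, Set.mem_preimage]
    rw [hZvec ω]
  have hmeasset : MeasurableSet {x : Fin n → ℝ | δ * W < τ * Z x} :=
    measurableSet_lt measurable_const (hZmeas.const_mul τ)
  have hev3 : μ {ω | δ * W < fopt 𝓕 h𝓕 (fun e => w' e ω)}
      = (Measure.pi ν) {x | δ * W < τ * Z x} := by
    rw [hev2, ← hjoint, Measure.map_apply hvecmeas hmeasset]
  have hsubset : {x : Fin n → ℝ | δ * W < τ * Z x} ⊆ {x | δ * m ≤ Z x} := by
    intro x hx
    simp only [Set.mem_setOf_eq] at hx ⊢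
    rw [hWτm] at hx
    nlinarith
  -- apply the self-bounding tail bound
  have htail : ((Measure.pi ν) {x | δ * m ≤ Z x}).toReal
      ≤ Real.exp (-(δ * Real.log δ - δ + 1) * m) :=
    selfbounding_tail n ν hνprob Z hZmeas (n : ℝ) (Nat.cast_nonneg n)
      hZbd hmono hlip hsb hδ
  -- numerics
  have hm0 : 0 ≤ m := by
    rw [hm]
    exact integral_nonneg (fun x => (hZbd x).1)
  have hmc : c < m := by
    rw [hWτm] at hWc
    nlinarith
  have hden : (0:ℝ) < 3 * (δ - 1)^2 := by nlinarith
  have hden2 : (0:ℝ) < 4 + 2 * δ := by linarith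
  have hlogka : 0 ≤ Real.log (k / α) := Real.log_nonneg (by
    rw [le_div_iff₀ hα0]
    linarith)
  have hc' : (4 + 2 * δ) * Real.log (k / α) ≤ c * (3 * (δ - 1)^2) := by
    rw [div_mul_eq_mul_div, div_le_iff₀ hden] at hc
    linarith
  have hc0 : 0 ≤ c := by nlinarith
  have hbc := bennett_cmp hδ
  have hkey : Real.log (k / α) < (δ * Real.log δ - δ + 1) * m := by
    have s1 : 3 * (δ - 1)^2 / (4 + 2*δ) * c < 3 * (δ - 1)^2 / (4 + 2*δ) * m := by
      apply mul_lt_mul_of_pos_left hmc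
      positivity
    have s2 : Real.log (k / α) ≤ 3 * (δ - 1)^2 / (4 + 2*δ) * c := by
      rw [div_mul_eq_mul_div, le_div_iff₀ hden2]
      linarith
    have s3 : 3 * (δ - 1)^2 / (4 + 2*δ) * m ≤ (δ * Real.log δ - δ + 1) * m :=
      mul_le_mul_of_nonneg_right hbc hm0
    linarith
  have hfinal : Real.exp (-(δ * Real.log δ - δ + 1) * m) ≤ α / k := by
    have h7 : Real.exp (-(δ * Real.log δ - δ + 1) * m) ≤ Real.exp (-Real.log (k / α)) := by
      apply Real.exp_le_exp.2
      linarith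
    have h8 : Real.exp (-Real.log (k / α)) = α / k := by
      rw [Real.exp_neg, Real.exp_log (by positivity : (0:ℝ) < k / α), inv_div]
    linarith
  -- put it together
  calc (μ {ω | δ * W < fopt 𝓕 h𝓕 (fun e => w e ω)}).toReal
      = ((Measure.pi ν) {x | δ * W < τ * Z x}).toReal := by rw [hev1, hev3]
    _ ≤ ((Measure.pi ν) {x | δ * m ≤ Z x}).toReal := by
        apply ENNReal.toReal_mono (measure_ne_top _ _)
        exact measure_mono hsubset
    _ ≤ Real.exp (-(δ * Real.log δ - δ + 1) * m) := htail
    _ ≤ α / k := hfinal
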